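/- For a τ-regularized finite MDP with direct parameterization, the regularized policy gradient formula holds: ∇_π V^π(ρ) = (1/(1−γ)) [ d^π(s) ( Q^π(s,·) − τ ∇h_s(π(s)) ) ]_{s∈S}, where d^π is the discounted state visitation distribution starting from ρ. -/

import Mathlib

open scoped BigOperators

noncomputable section

def stateDist {S A : Type*} [Fintype S] [Fintype A] (P : S → A → S → ℝ)
    (π : S → A → ℝ) (ρ : S → ℝ) : ℕ → S → ℝ
  | 0 => ρ
  | t + 1 => fun s' => ∑ s, ∑ a, stateDist P π ρ t s * π s a * P s a s'

/-- Regularized value function `V^π_{M_τ}(ρ)`. -/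
def valueFun {S A : Type*} [Fintype S] [Fintype A] (γ τ : ℝ) (r : S → A → ℝ)
    (P : S → A → S → ℝ) (h : S → (A → ℝ) → ℝ) (π : S → A → ℝ) (ρ : S → ℝ) : ℝ :=
  ∑' t : ℕ, γ ^ t * ∑ s, stateDist P π ρ t s *
    ((∑ a, π s a * r s a) - τ * h s (π s))

/-- Regularized value function started from state `s`. -/
def valueFunState {S A : Type*} [Fintype S] [Fintype A] [DecidableEq S]
    (γ τ : ℝ) (r : S → A → ℝ) (P : S → A → S → ℝ) (h : S → (A → ℝ) → ℝ)
    (π : S → A → ℝ) (s : S) : ℝ :=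
  valueFun γ τ r P h π (fun s' => if s' = s then 1 else 0)

/-- Regularized Q-function: `Q^π(s,a) = r(s,a) + γ E_{s'∼P(s,a)}[V^π(s')]`. -/
def qFun {S A : Type*} [Fintype S] [Fintype A] [DecidableEq S]
    (γ τ : ℝ) (r : S → A → ℝ) (P : S → A → S → ℝ) (h : S → (A → ℝ) → ℝ)
    (π : S → A → ℝ) (s : S) (a : A) : ℝ :=
  r s a + γ * ∑ s', P s a s' * valueFunState γ τ r P h π s'

/-- Discounted state visitation distribution starting from `ρ`. -/
def dVisit {S A : Type*} [Fintype S] [Fintype A] (γ : ℝ) (P : S → A → S → ℝ)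
    (π : S → A → ℝ) (ρ : S → ℝ) (sbar : S) : ℝ :=
  (1 - γ) * ∑' t : ℕ, γ ^ t * stateDist P π ρ t sbar

section Aux

open Matrix

attribute [local instance] Matrix.linftyOpNormedRing Matrix.linftyOpNormedAlgebra

variable {S A : Type*} [Fintype S] [Fintype A] [DecidableEq S]

def polM (P : S → A → S → ℝ) (π : S → A → ℝ) : Matrix S S ℝ :=
  fun s s' => ∑ a, π s a * P s a s'

def cvec (τ : ℝ) (r : S → A → ℝ) (h : S → (A → ℝ) → ℝ) (π : S → A → ℝ) : S → ℝ :=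
  fun s => (∑ a, π s a * r s a) - τ * h s (π s)

lemma stateDist_eq (P : S → A → S → ℝ) (π : S → A → ℝ) (ρ : S → ℝ) (t : ℕ) :
    stateDist P π ρ t = ρ ᵥ* (polM P π) ^ t := by
  induction t with
  | zero => simp [stateDist]
  | succ t ih =>
    funext s'
    rw [pow_succ, ← vecMul_vecMul, ← ih]
    simp only [stateDist, vecMul, dotProduct, polM, Finset.mul_sum]
    congr 1; funext s; congr 1; funext a; ring

lemma norm_polM_le (P : S → A → S → ℝ) (hP : ∀ s a, (∀ s', 0 ≤ P s a s') ∧ ∑ s', P s a s' = 1)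
    (π : S → A → ℝ) (hπ : ∀ s, (∀ a, 0 ≤ π s a) ∧ ∑ a, π s a = 1) :
    ‖polM P π‖ ≤ 1 := by
  rw [Matrix.linfty_opNorm_def]
  have key : ∀ s, (∑ s', ‖polM P π s s'‖₊) = 1 := by
    intro s
    have hnn : ∀ s', 0 ≤ polM P π s s' := fun s' =>
      Finset.sum_nonneg fun a _ => mul_nonneg ((hπ s).1 a) ((hP s a).1 s')
    have : ((∑ s', ‖polM P π s s'‖₊ : NNReal) : ℝ) = 1 := by
      rw [NNReal.coe_sum]
      simp only [coe_nnnorm]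
      calc ∑ s', ‖polM P π s s'‖ = ∑ s', polM P π s s' := by
            refine Finset.sum_congr rfl fun s' _ => ?_
            exact Real.norm_of_nonneg (hnn s')
        _ = ∑ a, π s a * ∑ s', P s a s' := by
            simp only [polM, Finset.mul_sum]
            exact Finset.sum_comm
        _ = 1 := by
            simp only [(fun a => (hP s a).2 : ∀ a, ∑ s', P s a s' = 1), mul_one, (hπ s).2]
    exact_mod_cast this
  have : (Finset.univ.sup fun s => ∑ s', ‖polM P π s s'‖₊) ≤ 1 :=
    Finset.sup_le fun s _ => le_of_eq (key s)
  exact_mod_cast this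

lemma valueFun_eq (γ τ : ℝ) (r : S → A → ℝ) (P : S → A → S → ℝ)
    (h : S → (A → ℝ) → ℝ) (π : S → A → ℝ) (ρ : S → ℝ)
    (hnorm : ‖γ • polM P π‖ < 1) :
    valueFun γ τ r P h π ρ =
      ρ ⬝ᵥ (Ring.inverse (1 - γ • polM P π) *ᵥ cvec τ r h π) := by
  set x := γ • polM P π with hx
  have hsum : Summable (fun t : ℕ => x ^ t) := summable_geometric_of_norm_lt_one hnorm
  set L : Matrix S S ℝ →L[ℝ] ℝ := LinearMap.toContinuousLinearMap
    { toFun := fun N => ρ ⬝ᵥ (N *ᵥ cvec τ r h π)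
      map_add' := by intros; simp [Matrix.add_mulVec]
      map_smul' := by intros; simp [Matrix.smul_mulVec] } with hLdef
  have hL : ∀ N, L N = ρ ⬝ᵥ (N *ᵥ cvec τ r h π) := fun N => rfl
  have hterm : ∀ t : ℕ, γ ^ t * ∑ s, stateDist P π ρ t s *
      ((∑ a, π s a * r s a) - τ * h s (π s)) = L (x ^ t) := by
    intro t
    rw [hx, smul_pow, hL, Matrix.smul_mulVec, dotProduct_smul, smul_eq_mul,
      dotProduct_mulVec, ← stateDist_eq]
    rfl
  calc valueFun γ τ r P h π ρ = ∑' t, L (x ^ t) := tsum_congr hterm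
    _ = L (∑' t, x ^ t) := (L.map_tsum hsum).symm
    _ = _ := by rw [hL, ← geom_series_eq_inverse x hnorm]; rfl

lemma dVisit_eq (γ : ℝ) (P : S → A → S → ℝ) (π : S → A → ℝ) (ρ : S → ℝ) (sbar : S)
    (hnorm : ‖γ • polM P π‖ < 1) :
    dVisit γ P π ρ sbar =
      (1 - γ) * (ρ ᵥ* Ring.inverse (1 - γ • polM P π)) sbar := by
  set x := γ • polM P π with hx
  have hsum : Summable (fun t : ℕ => x ^ t) := summable_geometric_of_norm_lt_one hnorm
  set L : Matrix S S ℝ →L[ℝ] ℝ := LinearMap.toContinuousLinearMap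
    { toFun := fun N => (ρ ᵥ* N) sbar
      map_add' := by intros; simp [Matrix.vecMul_add]
      map_smul' := by
        intros m N
        simp only [Matrix.vecMul, dotProduct, Matrix.smul_apply, smul_eq_mul,
          RingHom.id_apply, Finset.mul_sum]
        exact Finset.sum_congr rfl fun i _ => by ring } with hLdef
  have hL : ∀ N, L N = (ρ ᵥ* N) sbar := fun N => rfl
  have hterm : ∀ t : ℕ, γ ^ t * stateDist P π ρ t sbar = L (x ^ t) := by
    intro t
    rw [hx, smul_pow, _root_.map_smul, smul_eq_mul, hL, ← stateDist_eq]
  unfold dVisit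
  congr 1
  calc ∑' t, γ ^ t * stateDist P π ρ t sbar = ∑' t, L (x ^ t) := tsum_congr hterm
    _ = L (∑' t, x ^ t) := (L.map_tsum hsum).symm
    _ = _ := by rw [hL, ← geom_series_eq_inverse x hnorm]; rfl

end Aux

section Main

open Matrix

attribute [local instance] Matrix.linftyOpNormedRing Matrix.linftyOpNormedAlgebra

theorem regularized_policy_gradient {S A : Type*} [Fintype S] [Fintype A]
    [DecidableEq S] [Nonempty S] [Nonempty A]
    (γ τ : ℝ) (hγ0 : 0 < γ) (hγ1 : γ < 1) (hτ : 0 ≤ τ)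
    (r : S → A → ℝ) (P : S → A → S → ℝ)
    (hP : ∀ s a, (∀ s', 0 ≤ P s a s') ∧ ∑ s', P s a s' = 1)
    (ρ : S → ℝ) (hρpos : ∀ s, 0 ≤ ρ s) (hρ1 : ∑ s, ρ s = 1)
    (h : S → (A → ℝ) → ℝ) (hdiffh : ∀ s, Differentiable ℝ (h s))
    (π : S → A → ℝ) (hπ : ∀ s, (∀ a, 0 ≤ π s a) ∧ ∑ a, π s a = 1) :
    DifferentiableAt ℝ (fun π' => valueFun γ τ r P h π' ρ) π ∧
    ∀ u : S → A → ℝ,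
      fderiv ℝ (fun π' => valueFun γ τ r P h π' ρ) π u =
        (1 / (1 - γ)) * ∑ s, dVisit γ P π ρ s *
          ((∑ a, u s a * qFun γ τ r P h π s a) - τ * fderiv ℝ (h s) (π s) (u s)) := by
  classical
  -- the policy matrix as a continuous linear map
  set Mclm : (S → A → ℝ) →L[ℝ] Matrix S S ℝ := LinearMap.toContinuousLinearMap
    { toFun := fun π' => polM P π'
      map_add' := by
        intros x y; funext s s'
        simp [polM, add_mul, Finset.sum_add_distrib]
      map_smul' := by
        intros c x; funext s s'
        simp [polM, Finset.mul_sum, mul_assoc] } with hMclmdef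
  have hMclm : ∀ π', Mclm π' = polM P π' := fun _ => rfl
  have hx : ‖γ • polM P π‖ < 1 := by
    rw [norm_smul]
    have h1 : ‖polM P π‖ ≤ 1 := norm_polM_le P hP π hπ
    have h2 : ‖γ‖ = γ := by rw [Real.norm_eq_abs, abs_of_pos hγ0]
    calc ‖γ‖ * ‖polM P π‖ ≤ γ * 1 := by
          rw [h2]; exact mul_le_mul_of_nonneg_left h1 hγ0.le
      _ < 1 := by linarith
  set B : Matrix S S ℝ := 1 - γ • polM P π with hB
  set Binv : Matrix S S ℝ := Ring.inverse B with hBinvdef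
  set c : S → ℝ := cvec τ r h π with hcdef
  have hBunit : IsUnit B := isUnit_one_sub_of_norm_lt_one hx
  -- derivative of the affine map π' ↦ 1 - γ • Mclm π'
  have hφ : HasFDerivAt (fun π' : S → A → ℝ => 1 - γ • Mclm π') (-(γ • Mclm)) π := by
    have h1 : HasFDerivAt (fun π' : S → A → ℝ => γ • Mclm π') (γ • Mclm) π :=
      Mclm.hasFDerivAt.const_smul γ
    exact h1.const_sub 1
  -- derivative of the inverse map
  have e1 : ((hBunit.unit⁻¹ : (Matrix S S ℝ)ˣ) : Matrix S S ℝ) = Binv := by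
    have h2 := Ring.inverse_unit hBunit.unit
    rw [hBunit.unit_spec] at h2
    exact h2.symm
  set Dg : (S → A → ℝ) →L[ℝ] Matrix S S ℝ :=
    (-(ContinuousLinearMap.mulLeftRight ℝ (Matrix S S ℝ) Binv Binv)).comp
      (-(γ • Mclm)) with hDgdef
  have hginv : HasFDerivAt (fun π' : S → A → ℝ => Ring.inverse (1 - γ • Mclm π')) Dg π := by
    have hu := hasFDerivAt_ringInverse (𝕜 := ℝ) hBunit.unit
    rw [e1, hBunit.unit_spec] at hu
    exact hu.comp π hφ
  -- derivative of cvec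
  set lr : S → ((S → A → ℝ) →L[ℝ] ℝ) := fun s => LinearMap.toContinuousLinearMap
    { toFun := fun u : S → A → ℝ => ∑ a, u s a * r s a
      map_add' := by intros; simp [add_mul, Finset.sum_add_distrib]
      map_smul' := by intros; simp [Finset.mul_sum, mul_assoc] } with hlrdef
  have hlr : ∀ s u, lr s u = ∑ a, u s a * r s a := fun _ _ => rfl
  set Dc : (S → A → ℝ) →L[ℝ] (S → ℝ) := ContinuousLinearMap.pi (fun s =>
    lr s - τ • ((fderiv ℝ (h s) (π s)).comp (ContinuousLinearMap.proj s))) with hDcdef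
  have hDc : ∀ u s, Dc u s = (∑ a, u s a * r s a) - τ * fderiv ℝ (h s) (π s) (u s) :=
    fun u s => rfl
  have hcd : HasFDerivAt (cvec τ r h) Dc π := by
    rw [hDcdef]
    apply hasFDerivAt_pi.2
    intro s
    have h1 : HasFDerivAt (fun π' : S → A → ℝ => ∑ a, π' s a * r s a) (lr s) π :=
      (lr s).hasFDerivAt
    have hproj := (ContinuousLinearMap.proj (R := ℝ) (φ := fun _ : S => A → ℝ) s).hasFDerivAt
      (x := π)
    have h2 : HasFDerivAt (fun π' : S → A → ℝ => h s (π' s))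
        ((fderiv ℝ (h s) (π s)).comp (ContinuousLinearMap.proj s)) π :=
      ((hdiffh s (π s)).hasFDerivAt).comp π hproj
    exact h1.sub (h2.const_mul τ)
  -- evaluation functionals
  set s₀ : S := Classical.arbitrary S with hs₀
  set Ev : Matrix S S ℝ →L[ℝ] ℝ := LinearMap.toContinuousLinearMap
    { toFun := fun N : Matrix S S ℝ => ρ ⬝ᵥ (fun s => N s s₀)
      map_add' := by
        intros N₁ N₂
        simp only [dotProduct, Matrix.add_apply, mul_add, Finset.sum_add_distrib]
      map_smul' := by
        intros m N
        simp only [dotProduct, Matrix.smul_apply, smul_eq_mul, RingHom.id_apply,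
          Finset.mul_sum]
        exact Finset.sum_congr rfl fun i _ => by ring } with hEvdef
  set J : (S → ℝ) →L[ℝ] Matrix S S ℝ := LinearMap.toContinuousLinearMap
    { toFun := fun v : S → ℝ => (fun s _ => v s : Matrix S S ℝ)
      map_add' := by intros; rfl
      map_smul' := by intros; rfl } with hJdef
  have hJmul : ∀ (N : Matrix S S ℝ) (v : S → ℝ), N * J v = J (N *ᵥ v) := by
    intro N v; funext s t
    simp [hJdef, Matrix.mul_apply, Matrix.mulVec, dotProduct]
    rfl
  have hEvJ : ∀ (v : S → ℝ), Ev (J v) = ρ ⬝ᵥ v := fun v => rfl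
  -- the locally-equal closed form G
  set G : (S → A → ℝ) → ℝ :=
    fun π' => Ev (Ring.inverse (1 - γ • Mclm π') * J (cvec τ r h π')) with hGdef
  have hmul := hginv.mul' ((J.hasFDerivAt).comp π hcd)
  have hG := Ev.hasFDerivAt.comp π hmul
  -- valueFun agrees with G near π
  have hopen : IsOpen {π' : S → A → ℝ | ‖γ • Mclm π'‖ < 1} := by
    have hcont : Continuous fun π' : S → A → ℝ => ‖γ • Mclm π'‖ :=
      (Mclm.continuous.const_smul γ).norm
    exact isOpen_lt hcont continuous_const
  have hmem : π ∈ {π' : S → A → ℝ | ‖γ • Mclm π'‖ < 1} := hx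
  have heq : (fun π' => valueFun γ τ r P h π' ρ) =ᶠ[nhds π] G := by
    filter_upwards [hopen.mem_nhds hmem] with π' hπ'
    have hπ'' : ‖γ • polM P π'‖ < 1 := by rwa [hMclm] at hπ'
    have hval := valueFun_eq γ τ r P h π' ρ hπ''
    have hG1 : G π' = ρ ⬝ᵥ (Ring.inverse (1 - γ • polM P π') *ᵥ cvec τ r h π') := by
      rw [hGdef]
      show Ev (Ring.inverse (1 - γ • Mclm π') * J (cvec τ r h π')) = _
      rw [hJmul, hEvJ, hMclm]
    rw [hval, hG1]
  have hdiff : DifferentiableAt ℝ (fun π' => valueFun γ τ r P h π' ρ) π :=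
    hG.differentiableAt.congr_of_eventuallyEq heq
  refine ⟨hdiff, fun u => ?_⟩
  have hG' : HasFDerivAt G (Ev.comp (Binv • J.comp Dc + Dg.smulRight (J c))) π := hG
  rw [heq.fderiv_eq, hG'.fderiv]
  -- identification of valueFunState with the closed form
  have hVS : ∀ s', valueFunState γ τ r P h π s' = (Binv *ᵥ c) s' := by
    intro s'
    rw [valueFunState, valueFun_eq γ τ r P h π _ hx]
    show (fun s'' => if s'' = s' then (1:ℝ) else 0) ⬝ᵥ (Binv *ᵥ c) = (Binv *ᵥ c) s'
    simp [dotProduct, ite_mul, Finset.sum_ite_eq']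
  have hdv : ∀ s, dVisit γ P π ρ s = (1 - γ) * (ρ ᵥ* Binv) s :=
    fun s => dVisit_eq γ P π ρ s hx
  have hDgu : Dg u = Binv * (γ • polM P u) * Binv := by
    show -(Binv * -(γ • Mclm u) * Binv) = _
    rw [mul_neg, neg_mul, neg_neg, hMclm]
  have step : (Ev.comp (Binv • J.comp Dc + Dg.smulRight (J c))) u
      = (ρ ᵥ* Binv) ⬝ᵥ Dc u + (ρ ᵥ* Binv) ⬝ᵥ ((γ • polM P u) *ᵥ (Binv *ᵥ c)) := by
    simp only [ContinuousLinearMap.comp_apply, ContinuousLinearMap.add_apply,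
      ContinuousLinearMap.smul_apply, ContinuousLinearMap.smulRight_apply, smul_eq_mul,
      map_add, hDgu]
    rw [hJmul Binv (Dc u)]
    rw [mul_assoc, hJmul Binv c, hJmul, hEvJ, hEvJ, ← Matrix.mulVec_mulVec,
      Matrix.dotProduct_mulVec ρ Binv, Matrix.dotProduct_mulVec ρ Binv]
  rw [step]
  have hq : ∀ s, (∑ a, u s a * qFun γ τ r P h π s a)
      = (∑ a, u s a * r s a) + γ * ((polM P u) *ᵥ (Binv *ᵥ c)) s := by
    intro s
    have hmv : ((polM P u) *ᵥ (Binv *ᵥ c)) s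
        = ∑ a, u s a * ∑ s', P s a s' * (Binv *ᵥ c) s' := by
      have e : ((polM P u) *ᵥ (Binv *ᵥ c)) s
          = ∑ s', ∑ a, u s a * P s a s' * (Binv *ᵥ c) s' := by
        show ∑ s', polM P u s s' * (Binv *ᵥ c) s' = _
        exact Finset.sum_congr rfl fun s' _ => by
          simp only [polM, Finset.sum_mul]
      rw [e, Finset.sum_comm]
      exact Finset.sum_congr rfl fun a _ => by
        rw [Finset.mul_sum]
        exact Finset.sum_congr rfl fun s' _ => by ring
    rw [hmv, Finset.mul_sum, ← Finset.sum_add_distrib]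
    refine Finset.sum_congr rfl fun a _ => ?_
    simp only [qFun, hVS]
    ring
  calc (ρ ᵥ* Binv) ⬝ᵥ Dc u + (ρ ᵥ* Binv) ⬝ᵥ ((γ • polM P u) *ᵥ (Binv *ᵥ c))
      = ∑ s, (ρ ᵥ* Binv) s * (((∑ a, u s a * r s a) - τ * fderiv ℝ (h s) (π s) (u s))
          + γ * ((polM P u) *ᵥ (Binv *ᵥ c)) s) := by
        rw [Matrix.smul_mulVec]
        simp only [dotProduct, hDc, Pi.smul_apply, smul_eq_mul, mul_add,
          Finset.sum_add_distrib]
    _ = (1 / (1 - γ)) * ∑ s, dVisit γ P π ρ s *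
          ((∑ a, u s a * qFun γ τ r P h π s a) - τ * fderiv ℝ (h s) (π s) (u s)) := by
        have h1γ : (1 : ℝ) - γ ≠ 0 := by linarith
        simp only [hdv, hq, Finset.mul_sum]
        refine Finset.sum_congr rfl fun s _ => ?_
        field_simp
        ring

end Main

end
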